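/- Let G be a 4-regular simple graph on n ≥ 4 vertices whose edge set is partitioned into a family 𝒯 of triangles (3-cycles), and suppose G has a Hamilton cycle C. Then for every integer l with 3·l ≥ 2·n and l ≤ n, the graph G contains a cycle of length l. -/

import Mathlib

/-- `T` is (the edge set of) a triangle of `G`: three pairwise distinct, pairwise adjacent
vertices, with `T` consisting of the three edges between them. -/
def IsTriangleEdgeSet {V : Type*} [DecidableEq V] (G : SimpleGraph V)
    (T : Finset (Sym2 V)) : Prop :=
  ∃ a b c : V, a ≠ b ∧ a ≠ c ∧ b ≠ c ∧ G.Adj a b ∧ G.Adj b c ∧ G.Adj a c ∧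
    T = {s(a, b), s(b, c), s(a, c)}

/-- The edge set of `G` is partitioned into the family `𝒯` of triangles: every member of
`𝒯` is a triangle of `G`, and every edge of `G` lies in exactly one member of `𝒯`. -/
def IsTrianglePartition {V : Type*} [Fintype V] [DecidableEq V] (G : SimpleGraph V)
    [DecidableRel G.Adj] (𝒯 : Finset (Finset (Sym2 V))) : Prop :=
  (∀ T ∈ 𝒯, IsTriangleEdgeSet G T) ∧
  (∀ e ∈ G.edgeFinset, ∃! T, T ∈ 𝒯 ∧ e ∈ T)

section Aux

variable {V : Type*} [DecidableEq V] {G : SimpleGraph V}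

set_option linter.unusedSectionVars false

lemma walk_of_chain' : ∀ (l : List V) (a : V), List.Chain G.Adj a l →
    ∃ p : G.Walk a ((a :: l).getLast (List.cons_ne_nil a l)), p.support = a :: l := by
  intro l
  induction l with
  | nil => intro a _; exact ⟨SimpleGraph.Walk.nil, rfl⟩
  | cons b t ih =>
    intro a hc
    unfold List.Chain at hc
    rw [List.chain_cons] at hc
    obtain ⟨p, hp⟩ := ih b hc.2
    have hlast : ((a :: b :: t).getLast (List.cons_ne_nil a (b :: t)))
        = ((b :: t).getLast (List.cons_ne_nil b t)) := List.getLast_cons (List.cons_ne_nil b t)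
    rw [hlast]
    exact ⟨SimpleGraph.Walk.cons hc.1 p, by simp [hp]⟩

lemma not_edge_of_path' : ∀ {a b : V} (p : G.Walk a b), p.support.Nodup → 2 ≤ p.length →
    s(b, a) ∉ p.edges := by
  intro a b p hnd hlen he
  match p with
  | .nil => simp at hlen
  | .cons (v := c) h q =>
    rw [SimpleGraph.Walk.edges_cons, List.mem_cons] at he
    rw [SimpleGraph.Walk.support_cons, List.nodup_cons] at hnd
    rcases he with he | he
    · rw [Sym2.eq_iff] at he
      rcases he with ⟨hba, hac⟩ | ⟨hbc, _⟩
      · exact hnd.1 (hba ▸ q.end_mem_support)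
      · subst hbc
        have hq : q.IsPath := (SimpleGraph.Walk.isPath_def q).2 hnd.2
        have : q = SimpleGraph.Walk.nil := by
          have := SimpleGraph.Path.loop_eq ⟨q, hq⟩
          simpa [SimpleGraph.Path.nil] using congrArg Subtype.val this
        subst this
        simp at hlen
    · exact hnd.1 (SimpleGraph.Walk.snd_mem_support_of_mem_edges q he)

lemma cycle_of_list' (xs : List V) (hne : xs ≠ []) (hnd : xs.Nodup) (h3 : 3 ≤ xs.length)
    (hch : List.Chain' G.Adj xs) (hcl : G.Adj (xs.getLast hne) (xs.head hne)) :
    ∃ (w : V) (c : G.Walk w w), c.IsCycle ∧ c.length = xs.length := by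
  match xs, hne with
  | a :: t, _ =>
    obtain ⟨p, hp⟩ := walk_of_chain' t a hch
    have hpath : p.IsPath := (SimpleGraph.Walk.isPath_def p).2 (by rw [hp]; exact hnd)
    have hlen : p.length = t.length := by
      have := congrArg List.length hp
      rw [SimpleGraph.Walk.length_support] at this
      simpa using this
    have hl2 : 2 ≤ p.length := by simp at h3; omega
    have hadj : G.Adj ((a :: t).getLast (List.cons_ne_nil a t)) a := hcl
    refine ⟨_, SimpleGraph.Walk.cons hadj p, ?_, ?_⟩
    · rw [SimpleGraph.Walk.cons_isCycle_iff]
      exact ⟨hpath, not_edge_of_path' p hpath.support_nodup hl2⟩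
    · simp [hlen]

lemma chain_filter' (f : V → V) (S : Finset V) (hcons : ∀ x : V, x ∈ S → f x ∉ S) :
    ∀ (n : ℕ) (l : List V), l.length ≤ n → ∀ a : V, List.Chain (fun x y => y = f x) a l →
      List.Chain (fun x y => y = f x ∨ (f x ∈ S ∧ y = f (f x))) a (l.filter (· ∉ S)) := by
  intro n
  induction n with
  | zero => intro l hl a _; rw [List.length_eq_zero_iff.1 (Nat.le_zero.1 hl)]; simp [List.Chain]
  | succ n ih =>
    intro l hl a hc
    match l with
    | [] => simp [List.Chain]
    | b :: t =>
      unfold List.Chain at hc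
      rw [List.chain_cons] at hc
      obtain ⟨hb, ht⟩ := hc
      by_cases hbS : b ∈ S
      · rw [List.filter_cons_of_neg (by simpa using hbS)]
        match t with
        | [] => simp [List.Chain]
        | c :: t' =>
          rw [List.chain_cons] at ht
          obtain ⟨hcb, ht'⟩ := ht
          have hcS : c ∉ S := by subst hcb; exact hcons b hbS
          rw [List.filter_cons_of_pos (by simpa using hcS)]
          refine List.Chain.cons (Or.inr ⟨hb ▸ hbS, by rw [hcb, hb]⟩) ?_
          exact ih t' (by simp at hl; omega) c ht'
      · rw [List.filter_cons_of_pos (by simpa using hbS)]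
        exact List.Chain.cons (Or.inl hb) (ih t (by simp at hl; omega) b ht)

lemma chain'_iterate' (f : V → V) : ∀ (m : ℕ) (a : V),
    List.Chain' (fun x y => y = f x) (List.iterate f a m ++ [f^[m] a]) := by
  intro m
  induction m with
  | zero => intro a; simp [List.Chain']
  | succ k ih =>
    intro a
    rw [List.iterate, Function.iterate_succ_apply, List.cons_append]
    unfold List.Chain'
    rw [List.isChain_cons]
    refine ⟨?_, ih (f a)⟩
    intro y hy
    match k with
    | 0 => simp at hy; exact hy.symm
    | k + 1 => rw [List.iterate] at hy; simp at hy; exact hy.symm ▸ rfl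

lemma chain_split' {R : V → V → Prop} : ∀ (l : List V) (a b : V), List.Chain R a (l ++ [b]) →
    List.Chain R a l ∧ R ((a :: l).getLast (List.cons_ne_nil a l)) b := by
  intro l
  induction l with
  | nil => intro a b h; unfold List.Chain at h; rw [List.nil_append, List.chain_cons] at h; exact ⟨List.Chain.nil, h.1⟩
  | cons c t ih =>
    intro a b h
    unfold List.Chain at h
    rw [List.cons_append, List.chain_cons] at h
    obtain ⟨h1, h2⟩ := ih c b h.2
    refine ⟨List.Chain.cons h.1 h1, ?_⟩
    rw [List.getLast_cons (List.cons_ne_nil c t)]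
    exact h2

end Aux
lemma exists_next' {V : Type*} [Fintype V] [DecidableEq V] {G : SimpleGraph V} {u : V}
    {C : G.Walk u u} (hC : C.IsHamiltonianCycle) :
    ∃ next : V → V, (∀ v, G.Adj v (next v)) ∧ (∀ v, next^[Fintype.card V] v = v) ∧
      (∀ (v : V) (i : ℕ), 0 < i → i < Fintype.card V → next^[i] v ≠ v) := by
  classical
  set n := Fintype.card V with hn
  set J := C.support with hJdef
  have hJlen : J.length = n + 1 := by
    rw [hJdef, SimpleGraph.Walk.length_support, hC.length_eq]
  have hn3 : 3 ≤ n := by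
    have := hC.isCycle.three_le_length
    rw [hC.length_eq] at this; exact this
  set g : ℕ → V := fun i => J.getD i u with hg
  have hgd : ∀ (i : ℕ) (h : i < n + 1), g i = J[i]'(by omega) := by
    intro i h
    exact List.getD_eq_getElem J u (by omega)
  have hcons : J = u :: J.tail := SimpleGraph.Walk.support_eq_cons C
  have hJ0 : g 0 = u := by
    rw [hg]; simp only []; rw [hcons]; rfl
  have hJn : g n = u := by
    rw [hgd n (by omega)]
    have hne : J ≠ [] := by intro h; rw [h] at hJlen; simp at hJlen
    have h1 : J.getLast hne = u := SimpleGraph.Walk.getLast_support C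
    rw [List.getLast_eq_getElem] at h1
    refine Eq.trans ?_ h1
    congr 1
    omega
  have htail : J.tail.Nodup := hC.isCycle.support_nodup
  have htg : ∀ (i : ℕ), i < n → J.tail.getD i u = g (i + 1) := by
    intro i h
    have h1 : J.tail.getD i u = J.tail[i]'(by simp only [List.length_tail, hJlen]; omega) :=
      List.getD_eq_getElem _ u _
    rw [h1, List.getElem_tail, ← hgd (i+1) (by omega)]
  -- injectivity of g on [0, n)
  have hJinj : ∀ (p q : ℕ), p < n → q < n → g p = g q → p = q := by
    have key : ∀ (p q : ℕ), p < q → q < n → g p = g q → False := by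
      intro p q hpq hq heq
      rcases Nat.eq_zero_or_pos p with rfl | hp0
      · -- g q = u; but also g n = u; tail indices q-1 and n-1
        have h1 : J.tail.getD (q-1) u = J.tail.getD (n-1) u := by
          rw [htg (q-1) (by omega), htg (n-1) (by omega)]
          have e1 : q - 1 + 1 = q := by omega
          have e2 : n - 1 + 1 = n := by omega
          rw [e1, e2, ← heq, hJ0, hJn]
        rw [List.getD_eq_getElem _ u (by simp [hJlen]; omega),
            List.getD_eq_getElem _ u (by simp [hJlen]; omega)] at h1
        have := htail.getElem_inj_iff.mp h1
        omega
      · have h1 : J.tail.getD (p-1) u = J.tail.getD (q-1) u := by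
          rw [htg (p-1) (by omega), htg (q-1) (by omega)]
          have e1 : p - 1 + 1 = p := by omega
          have e2 : q - 1 + 1 = q := by omega
          rw [e1, e2, heq]
        rw [List.getD_eq_getElem _ u (by simp [hJlen]; omega),
            List.getD_eq_getElem _ u (by simp [hJlen]; omega)] at h1
        have := htail.getElem_inj_iff.mp h1
        omega
    intro p q hp hq heq
    rcases Nat.lt_trichotomy p q with h | h | h
    · exact absurd (key p q h hq heq) (by simp)
    · exact h
    · exact absurd (key q p h hp heq.symm) (by simp)
  -- indexOf basics
  have hidxlt : ∀ v : V, J.idxOf v < n ∧ g (J.idxOf v) = v := by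
    intro v
    have hv : v ∈ J := hC.mem_support v
    have hlt : J.idxOf v < J.length := List.idxOf_lt_length_iff.2 hv
    have hget : g (J.idxOf v) = v := by
      rw [hgd _ (by omega)]; exact List.getElem_idxOf hlt
    rcases Nat.lt_or_ge (J.idxOf v) n with h | h
    · exact ⟨h, hget⟩
    · exfalso
      have hidx : J.idxOf v = n := by omega
      have hvu : v = u := by rw [← hget, hidx, hJn]
      have h0 : J.idxOf v = 0 := by rw [hvu, hcons]; exact List.idxOf_cons_self
      omega
  -- coverage
  have hcov : ∀ v : V, ∃ j : ℕ, j < n ∧ g j = v := fun v => ⟨J.idxOf v, hidxlt v⟩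
  -- adjacency along J
  have hadjJ : ∀ (i : ℕ), i < n → G.Adj (g i) (g (i+1)) := by
    intro i h
    have hchain : List.Chain' G.Adj J := SimpleGraph.Walk.isChain_adj_support C
    have := List.isChain_iff_getElem.mp hchain i (by omega)
    rw [hgd i (by omega), hgd (i+1) (by omega)]
    simpa [List.get_eq_getElem] using this
  -- define next
  set next : V → V := fun v => g (J.idxOf v + 1) with hnext
  -- next of g j
  have hstep : ∀ j : ℕ, j < n → next (g j) = g (j + 1) := by
    intro j hj
    have hidx : J.idxOf (g j) = j := by
      obtain ⟨hlt, hget⟩ := hidxlt (g j)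
      exact hJinj _ _ hlt hj hget
    rw [hnext]; simp only []; rw [hidx]
  have hadj : ∀ v : V, G.Adj v (next v) := by
    intro v
    obtain ⟨j, hj, hgj⟩ := hcov v
    rw [← hgj, hstep j hj]
    exact hadjJ j hj
  -- iteration formula
  have hwrap : g n = g 0 := by rw [hJ0, hJn]
  have hiter : ∀ (i j : ℕ), j < n → next^[i] (g j) = g ((j + i) % n) := by
    intro i
    induction i with
    | zero => intro j hj; simp [Nat.mod_eq_of_lt hj]
    | succ k ih =>
      intro j hj
      rw [Function.iterate_succ_apply', ih j hj]
      have hm : (j + k) % n < n := Nat.mod_lt _ (by omega)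
      rw [hstep _ hm]
      rcases Nat.lt_or_ge ((j + k) % n + 1) n with h | h
      · have : (j + (k+1)) % n = (j + k) % n + 1 := by
          conv_lhs => rw [show j + (k+1) = (j+k) + 1 by omega]
          rw [← Nat.mod_add_mod, Nat.mod_eq_of_lt (by omega)]
        rw [this]
      · have he : (j + k) % n + 1 = n := by omega
        have : (j + (k+1)) % n = 0 := by
          conv_lhs => rw [show j + (k+1) = (j+k) + 1 by omega]
          rw [← Nat.mod_add_mod, he, Nat.mod_self]
        rw [this, he, hwrap]
  refine ⟨next, hadj, ?_, ?_⟩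
  · intro v
    obtain ⟨j, hj, hgj⟩ := hcov v
    rw [← hgj, hiter n j hj]
    congr 1
    rw [Nat.add_mod_right, Nat.mod_eq_of_lt hj]
  · intro v i hi0 hin hne
    obtain ⟨j, hj, hgj⟩ := hcov v
    rw [← hgj, hiter i j hj] at hne
    have hm : (j + i) % n < n := Nat.mod_lt _ (by omega)
    have := hJinj _ _ hm hj hne
    rcases Nat.lt_or_ge (j + i) n with h | h
    · rw [Nat.mod_eq_of_lt h] at this; omega
    · have : (j + i) % n = j + i - n := by
        rw [Nat.mod_eq_sub_mod h, Nat.mod_eq_of_lt (by omega)]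
      omega

lemma tri_struct' {V : Type*} [DecidableEq V] {G : SimpleGraph V} {T : Finset (Sym2 V)}
    (hT : IsTriangleEdgeSet G T) :
    T.card = 3 ∧ (∀ e ∈ T, e ∈ G.edgeSet) ∧ ∃ A : Finset V, A.card = 3 ∧
      (∀ e ∈ T, ∀ x ∈ e, x ∈ A) ∧ (∀ x ∈ A, ∀ y ∈ A, x ≠ y → G.Adj x y) := by
  obtain ⟨a, b, c, hab', hac', hbc', hab, hbc, hac, rfl⟩ := hT
  refine ⟨?_, ?_, {a, b, c}, ?_, ?_, ?_⟩
  · rw [Finset.card_insert_of_notMem, Finset.card_insert_of_notMem, Finset.card_singleton]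
    · simp only [Finset.mem_singleton]
      rw [Sym2.eq_iff]
      rintro (⟨h1, h2⟩ | ⟨h1, h2⟩) <;> simp_all
    · simp only [Finset.mem_insert, Finset.mem_singleton]
      rw [Sym2.eq_iff, Sym2.eq_iff]
      rintro ((⟨h1, h2⟩|⟨h1, h2⟩) | (⟨h1, h2⟩|⟨h1, h2⟩)) <;> simp_all
  · intro e he
    simp only [Finset.mem_insert, Finset.mem_singleton] at he
    rcases he with rfl | rfl | rfl <;> assumption
  · rw [Finset.card_insert_of_notMem, Finset.card_insert_of_notMem, Finset.card_singleton]
    · simpa using hbc'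
    · simp only [Finset.mem_insert, Finset.mem_singleton]
      push_neg
      exact ⟨hab', hac'⟩
  · intro e he x hx
    simp only [Finset.mem_insert, Finset.mem_singleton] at he ⊢
    rcases he with rfl | rfl | rfl <;> rw [Sym2.mem_iff] at hx <;> tauto
  · intro x hx y hy hxy
    simp only [Finset.mem_insert, Finset.mem_singleton] at hx hy
    rcases hx with rfl | rfl | rfl <;> rcases hy with rfl | rfl | rfl <;>
      first
        | exact absurd rfl hxy
        | exact hab | exact hbc | exact hac
        | exact hab.symm | exact hbc.symm | exact hac.symm
/-- If `G` is a `4`-regular graph on `n ≥ 4` vertices whose edges are partitioned into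
triangles and `G` has a Hamilton cycle, then for every `l` with `3 * l ≥ 2 * n` and
`l ≤ n`, the graph `G` contains a cycle of length `l`. -/
theorem cycles_of_large_lengths {V : Type*} [Fintype V] [DecidableEq V]
    (G : SimpleGraph V) [DecidableRel G.Adj]
    (hn : 4 ≤ Fintype.card V)
    (hreg : ∀ v : V, G.degree v = 4)
    (𝒯 : Finset (Finset (Sym2 V))) (h𝒯 : IsTrianglePartition G 𝒯)
    (u : V) (C : G.Walk u u) (hC : C.IsHamiltonianCycle) :
    ∀ l : ℕ, 2 * Fintype.card V ≤ 3 * l → l ≤ Fintype.card V →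
      ∃ (w : V) (c : G.Walk w w), c.IsCycle ∧ c.length = l := by
  classical
  intro l hl2 hln
  set n := Fintype.card V with hndef
  obtain ⟨next, hadj, hper, hnfix⟩ := exists_next' hC
  rw [← hndef] at hper hnfix
  -- basic facts about `next`
  have hinj : Function.Injective next := by
    intro x y hxy
    obtain ⟨m, hm⟩ : ∃ m, n = m + 1 := ⟨n - 1, by omega⟩
    have h1 : next^[n] x = next^[n] y := by
      rw [hm, Function.iterate_succ_apply, Function.iterate_succ_apply, hxy]
    rwa [hper x, hper y] at h1
  have hiterinj : ∀ (x : V) (i j : ℕ), i < n → j < n → next^[i] x = next^[j] x → i = j := by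
    have key : ∀ (x : V) (i j : ℕ), i < j → j < n → next^[i] x = next^[j] x → False := by
      intro x i j hij hj h
      have h2 : next^[j] x = next^[i] (next^[j-i] x) := by
        rw [← Function.iterate_add_apply]
        congr 1
        omega
      rw [h2] at h
      have h3 : x = next^[j-i] x := Function.Injective.iterate hinj i h
      exact hnfix x (j - i) (by omega) (by omega) h3.symm
    intro x i j hi hj h
    rcases Nat.lt_trichotomy i j with hlt | he | hlt
    · exact absurd (key x i j hlt hj h) not_false
    · exact he
    · exact absurd (key x j i hlt hi h.symm) not_false
  have hprev' : ∀ v, next^[n-1] (next v) = v := by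
    intro v
    have : next^[n-1] (next v) = next^[n] v := by
      rw [← Function.iterate_succ_apply]
      congr 1
      omega
    rw [this, hper]
  have hedge_inj : ∀ x y : V, s(x, next x) = s(y, next y) → x = y := by
    intro x y h
    rw [Sym2.eq_iff] at h
    rcases h with ⟨h1, -⟩ | ⟨h1, h2⟩
    · exact h1
    · exfalso
      have : next^[2] x = x := by
        rw [show (2:ℕ) = 1 + 1 from rfl, Function.iterate_add_apply]
        simp only [Function.iterate_one]
        rw [h2, ← h1]
      exact hnfix x 2 (by omega) (by omega) this
  have hEc' : ∀ v : V, s(v, next v) ∈ G.edgeFinset := by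
    intro v
    rw [SimpleGraph.mem_edgeFinset]
    exact hadj v
  -- the number of edges
  have hE2n : G.edgeFinset.card = 2 * n := by
    have hdeg := SimpleGraph.sum_degrees_eq_twice_card_edges G
    rw [Finset.sum_congr rfl (fun v _ => hreg v), Finset.sum_const, smul_eq_mul, mul_comm,
      Finset.card_univ] at hdeg
    omega
  -- choice of triangle for each edge
  set f : Sym2 V → Finset (Sym2 V) :=
    fun e => if h : e ∈ G.edgeFinset then (h𝒯.2 e h).choose else ∅ with hfdef
  have hfmem : ∀ e ∈ G.edgeFinset, f e ∈ 𝒯 ∧ e ∈ f e := by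
    intro e he
    rw [hfdef]
    simp only [dif_pos he]
    exact (h𝒯.2 e he).choose_spec.1
  have hfuniq : ∀ e ∈ G.edgeFinset, ∀ T, T ∈ 𝒯 → e ∈ T → f e = T := by
    intro e he T hT heT
    rw [hfdef]
    simp only [dif_pos he]
    exact ((h𝒯.2 e he).choose_spec.2 T ⟨hT, heT⟩).symm
  -- number of triangles
  have hcardT : 3 * 𝒯.card = 2 * n := by
    have hsum := Finset.card_eq_sum_card_fiberwise
      (f := f) (s := G.edgeFinset) (t := 𝒯) (fun e he => (hfmem e he).1)
    have heq : ∀ T ∈ 𝒯, G.edgeFinset.filter (fun e => f e = T) = T := by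
      intro T hT
      ext e
      simp only [Finset.mem_filter]
      constructor
      · rintro ⟨he, rfl⟩
        exact (hfmem e he).2
      · intro heT
        have he : e ∈ G.edgeFinset := by
          rw [SimpleGraph.mem_edgeFinset]
          exact (tri_struct' (h𝒯.1 T hT)).2.1 e heT
        exact ⟨he, hfuniq e he T hT heT⟩
    rw [Finset.sum_congr rfl (fun T hT => by rw [heq T hT]),
      Finset.sum_congr rfl (fun T hT => (tri_struct' (h𝒯.1 T hT)).1),
      Finset.sum_const, smul_eq_mul, hE2n] at hsum
    omega
  -- the cycle edges
  set Ec : Finset (Sym2 V) := Finset.image (fun v => s(v, next v)) Finset.univ with hEcdef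
  have hEcsub : Ec ⊆ G.edgeFinset := by
    intro e he
    rw [hEcdef, Finset.mem_image] at he
    obtain ⟨v, -, rfl⟩ := he
    exact hEc' v
  have hEccard : Ec.card = n := by
    rw [hEcdef, Finset.card_image_of_injective _ (fun x y h => hedge_inj x y h),
      Finset.card_univ]
  -- every triangle contains at most 2 cycle edges
  have hfib2 : ∀ T ∈ 𝒯, (Ec.filter (· ∈ T)).card ≤ 2 := by
    intro T hT
    by_contra hcon
    push_neg at hcon
    obtain ⟨e1, e2, e3, he1, he2, he3, h12, h13, h23⟩ := Finset.two_lt_card_iff.1 hcon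
    rw [Finset.mem_filter] at he1 he2 he3
    obtain ⟨v1, -, rfl⟩ := Finset.mem_image.1 (hEcdef ▸ he1.1)
    obtain ⟨v2, -, rfl⟩ := Finset.mem_image.1 (hEcdef ▸ he2.1)
    obtain ⟨v3, -, rfl⟩ := Finset.mem_image.1 (hEcdef ▸ he3.1)
    obtain ⟨-, -, A, hAcard, hAmem, hAadj⟩ := tri_struct' (h𝒯.1 T hT)
    have hv1A : v1 ∈ A := hAmem _ he1.2 _ (Sym2.mem_mk_left _ _)
    have hv2A : v2 ∈ A := hAmem _ he2.2 _ (Sym2.mem_mk_left _ _)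
    have hv3A : v3 ∈ A := hAmem _ he3.2 _ (Sym2.mem_mk_left _ _)
    have hn1A : next v1 ∈ A := hAmem _ he1.2 _ (Sym2.mem_mk_right _ _)
    have hn2A : next v2 ∈ A := hAmem _ he2.2 _ (Sym2.mem_mk_right _ _)
    have hn3A : next v3 ∈ A := hAmem _ he3.2 _ (Sym2.mem_mk_right _ _)
    have hv12 : v1 ≠ v2 := fun h => h12 (by rw [h])
    have hv13 : v1 ≠ v3 := fun h => h13 (by rw [h])
    have hv23 : v2 ≠ v3 := fun h => h23 (by rw [h])
    have hWA : ({v1, v2, v3} : Finset V) = A := by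
      apply Finset.eq_of_subset_of_card_le
      · intro x hx
        simp only [Finset.mem_insert, Finset.mem_singleton] at hx
        rcases hx with rfl | rfl | rfl <;> assumption
      · rw [hAcard, Finset.card_insert_of_notMem (by simp [hv12, hv13]),
          Finset.card_insert_of_notMem (by simp [hv23]), Finset.card_singleton]
    have hfix1 : ∀ x : V, next x ≠ x := by
      intro x h
      exact hnfix x 1 (by omega) (by omega) (by simpa using h)
    have hfix2 : ∀ x : V, next (next x) ≠ x := by
      intro x h
      refine hnfix x 2 (by omega) (by omega) ?_
      rw [show (2:ℕ) = 1 + 1 from rfl, Function.iterate_add_apply]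
      simpa using h
    have hfix3 : ∀ x : V, next (next (next x)) ≠ x := by
      intro x h
      refine hnfix x 3 (by omega) (by omega) ?_
      rw [show (3:ℕ) = 1 + 1 + 1 from rfl, Function.iterate_add_apply,
        Function.iterate_add_apply]
      simpa using h
    have hmemW : ∀ x : V, x ∈ A → x = v1 ∨ x = v2 ∨ x = v3 := by
      intro x hx
      rw [← hWA] at hx
      simpa using hx
    -- case analysis on the permutation structure
    rcases hmemW _ hn1A with h1 | h1 | h1
    · exact hfix1 v1 h1
    · -- next v1 = v2
      rcases hmemW _ hn2A with h2 | h2 | h2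
      · exact hfix2 v1 (by rw [h1, h2])
      · exact hfix1 v2 h2
      · -- next v2 = v3
        rcases hmemW _ hn3A with h3 | h3 | h3
        · exact hfix3 v1 (by rw [h1, h2, h3])
        · exact hv13 (hinj (by rw [h1, h3])).symm
        · exact hfix1 v3 h3
    · -- next v1 = v3
      rcases hmemW _ hn3A with h3 | h3 | h3
      · exact hfix2 v1 (by rw [h1, h3])
      · -- next v3 = v2
        rcases hmemW _ hn2A with h2 | h2 | h2
        · exact hfix3 v1 (by rw [h1, h3, h2])
        · exact hfix1 v2 h2
        · exact hv12 (hinj (by rw [h1, h2]))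
      · exact hfix1 v3 h3
    -- triangles containing at least 2 cycle edges
  set B : Finset (Finset (Sym2 V)) := 𝒯.filter (fun T => 2 ≤ (Ec.filter (· ∈ T)).card)
    with hBdef
  have hBsub : B ⊆ 𝒯 := Finset.filter_subset _ _
  -- counting: n ≤ |𝒯| + |B|
  have hcount : n ≤ 𝒯.card + B.card := by
    have hsum := Finset.card_eq_sum_card_fiberwise
      (f := f) (s := Ec) (t := 𝒯) (fun e he => (hfmem e (hEcsub he)).1)
    rw [hEccard] at hsum
    have hbound : ∀ T ∈ 𝒯,
        (Ec.filter (fun e => f e = T)).card ≤ 1 + (if T ∈ B then 1 else 0) := by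
      intro T hT
      have hsub : Ec.filter (fun e => f e = T) ⊆ Ec.filter (· ∈ T) := by
        intro e he
        rw [Finset.mem_filter] at he ⊢
        exact ⟨he.1, he.2 ▸ (hfmem e (hEcsub he.1)).2⟩
      have h1 := Finset.card_le_card hsub
      by_cases hTB : T ∈ B
      · rw [if_pos hTB]
        exact le_trans h1 (hfib2 T hT)
      · rw [if_neg hTB]
        rw [hBdef, Finset.mem_filter] at hTB
        push_neg at hTB
        have := hTB hT
        omega
    have h2 : (∑ T ∈ 𝒯, (Ec.filter (fun e => f e = T)).card) ≤
        ∑ T ∈ 𝒯, (1 + (if T ∈ B then 1 else 0)) := Finset.sum_le_sum hbound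
    rw [Finset.sum_add_distrib, Finset.sum_const, smul_eq_mul, mul_one] at h2
    have h3 : (∑ T ∈ 𝒯, (if T ∈ B then 1 else 0)) = B.card := by
      rw [Finset.sum_ite_mem, Finset.inter_eq_right.mpr hBsub, Finset.card_eq_sum_ones]
    rw [h3] at h2
    omega
  -- the set of "middle" vertices
  set M : Finset V := Finset.univ.filter
    (fun b => ∃ T ∈ 𝒯, s(next^[n-1] b, b) ∈ T ∧ s(b, next b) ∈ T) with hMdef
  have hMspec : ∀ b ∈ M, ∃ T ∈ 𝒯, s(next^[n-1] b, b) ∈ T ∧ s(b, next b) ∈ T := by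
    intro b hb
    rw [hMdef, Finset.mem_filter] at hb
    exact hb.2
  -- |B| ≤ |M|
  have hBM : B.card ≤ M.card := by
    set φ : Finset (Sym2 V) → V := fun T =>
      if h : ∃ b, b ∈ M ∧ s(b, next b) ∈ T then h.choose else u with hφdef
    have hex : ∀ T ∈ B, ∃ b, b ∈ M ∧ s(b, next b) ∈ T := by
      intro T hTB
      have hT : T ∈ 𝒯 := hBsub hTB
      rw [hBdef, Finset.mem_filter] at hTB
      obtain ⟨e1, he1, e2, he2, h12⟩ := Finset.one_lt_card.1 (by omega : 1 < (Ec.filter (· ∈ T)).card)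
      rw [Finset.mem_filter] at he1 he2
      obtain ⟨v, -, rfl⟩ := Finset.mem_image.1 (hEcdef ▸ he1.1)
      obtain ⟨w, -, rfl⟩ := Finset.mem_image.1 (hEcdef ▸ he2.1)
      have hvw : v ≠ w := fun h => h12 (by rw [h])
      obtain ⟨-, -, A, hAcard, hAmem, -⟩ := tri_struct' (h𝒯.1 T hT)
      have hfix1 : ∀ x : V, next x ≠ x := by
        intro x h
        exact hnfix x 1 (by omega) (by omega) (by simpa using h)
      have hfix2 : ∀ x : V, next (next x) ≠ x := by
        intro x h
        refine hnfix x 2 (by omega) (by omega) ?_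
        rw [show (2:ℕ) = 1 + 1 from rfl, Function.iterate_add_apply]
        simpa using h
      by_cases hnv : next v = w
      · refine ⟨w, ?_, he2.2⟩
        rw [hMdef, Finset.mem_filter]
        refine ⟨Finset.mem_univ _, T, hT, ?_, he2.2⟩
        have hpw : next^[n-1] w = v := by rw [← hnv, hprev']
        rw [hpw, ← hnv]
        exact he1.2
      · by_cases hnw : next w = v
        · refine ⟨v, ?_, he1.2⟩
          rw [hMdef, Finset.mem_filter]
          refine ⟨Finset.mem_univ _, T, hT, ?_, he1.2⟩
          have hpv : next^[n-1] v = w := by rw [← hnw, hprev']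
          rw [hpv, ← hnw]
          exact he2.2
        · exfalso
          have hmem4 : ({v, w, next v, next w} : Finset V) ⊆ A := by
            intro x hx
            simp only [Finset.mem_insert, Finset.mem_singleton] at hx
            rcases hx with rfl | rfl | rfl | rfl
            · exact hAmem _ he1.2 _ (Sym2.mem_mk_left _ _)
            · exact hAmem _ he2.2 _ (Sym2.mem_mk_left _ _)
            · exact hAmem _ he1.2 _ (Sym2.mem_mk_right _ _)
            · exact hAmem _ he2.2 _ (Sym2.mem_mk_right _ _)
          have hnvnw : next v ≠ next w := fun h => hvw (hinj h)
          have hvnv : v ≠ next v := fun h => hfix1 v h.symm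
          have hwnw : w ≠ next w := fun h => hfix1 w h.symm
          have hwnv : w ≠ next v := fun h => hnv h.symm
          have hvnw : v ≠ next w := fun h => hnw h.symm
          have hc4 : ({v, w, next v, next w} : Finset V).card = 4 := by
            rw [Finset.card_insert_of_notMem (by simp [hvw, hvnv, hvnw]),
              Finset.card_insert_of_notMem (by simp [hwnv, hwnw]),
              Finset.card_insert_of_notMem (by simp [hnvnw]), Finset.card_singleton]
          have := Finset.card_le_card hmem4
          rw [hc4, hAcard] at this
          omega
    apply Finset.card_le_card_of_injOn φ
    · intro T hTB
      rw [hφdef]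
      simp only [dif_pos (hex T hTB)]
      exact (hex T hTB).choose_spec.1
    · intro T1 h1 T2 h2 heq
      rw [hφdef] at heq
      simp only [dif_pos (hex T1 h1), dif_pos (hex T2 h2)] at heq
      obtain ⟨hb1M, hb1T⟩ := (hex T1 h1).choose_spec
      obtain ⟨hb2M, hb2T⟩ := (hex T2 h2).choose_spec
      rw [heq] at hb1T
      set b := (hex T2 h2).choose
      have he : s(b, next b) ∈ G.edgeFinset := hEc' b
      rw [← hfuniq _ he T1 (hBsub h1) hb1T, ← hfuniq _ he T2 (hBsub h2) hb2T]
  -- chord adjacency for middle vertices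
  have hchord : ∀ b ∈ M, G.Adj (next^[n-1] b) (next b) := by
    intro b hb
    obtain ⟨T, hT, h1, h2⟩ := hMspec b hb
    obtain ⟨-, -, A, -, hAmem, hAadj⟩ := tri_struct' (h𝒯.1 T hT)
    refine hAadj _ (hAmem _ h1 _ (Sym2.mem_mk_left _ _)) _ (hAmem _ h2 _ (Sym2.mem_mk_right _ _)) ?_
    intro h
    have : n - 1 = 1 := hiterinj b (n-1) 1 (by omega) (by omega) (by simpa using h)
    omega
  -- middle vertices are never consecutive
  have hnoncons : ∀ b ∈ M, next b ∉ M := by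
    intro b hb hb2
    obtain ⟨T, hT, h1, h2⟩ := hMspec b hb
    obtain ⟨T', hT', h1', h2'⟩ := hMspec (next b) hb2
    rw [hprev'] at h1'
    have he : s(b, next b) ∈ G.edgeFinset := hEc' b
    have hTT' : T = T' := by
      rw [← hfuniq _ he T hT h2, ← hfuniq _ he T' hT' h1']
    subst hTT'
    obtain ⟨-, -, A, hAcard, hAmem, -⟩ := tri_struct' (h𝒯.1 T hT)
    have hm1 : next^[n-1] b ∈ A := hAmem _ h1 _ (Sym2.mem_mk_left _ _)
    have hm2 : b ∈ A := hAmem _ h2 _ (Sym2.mem_mk_left _ _)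
    have hm3 : next b ∈ A := hAmem _ h2 _ (Sym2.mem_mk_right _ _)
    have hm4 : next (next b) ∈ A := hAmem _ h2' _ (Sym2.mem_mk_right _ _)
    -- the four vertices are distinct
    have hi0 : next^[0] b = b := rfl
    have hi1 : next^[1] b = next b := by simp
    have hi2 : next^[2] b = next (next b) := by
      rw [show (2:ℕ) = 1 + 1 from rfl, Function.iterate_add_apply]; simp
    have hd1 : next^[n-1] b ≠ b := fun h =>
      by have := hiterinj b (n-1) 0 (by omega) (by omega) (by rw [hi0, h]); omega
    have hd2 : next^[n-1] b ≠ next b := fun h =>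
      by have := hiterinj b (n-1) 1 (by omega) (by omega) (by rw [hi1, h]); omega
    have hd3 : next^[n-1] b ≠ next (next b) := fun h =>
      by have := hiterinj b (n-1) 2 (by omega) (by omega) (by rw [hi2, h]); omega
    have hd4 : b ≠ next b := fun h =>
      by have := hiterinj b 0 1 (by omega) (by omega) (by rw [hi0, hi1]; exact h); omega
    have hd5 : b ≠ next (next b) := fun h =>
      by have := hiterinj b 0 2 (by omega) (by omega) (by rw [hi0, hi2]; exact h); omega
    have hd6 : next b ≠ next (next b) := fun h =>
      by have := hiterinj b 1 2 (by omega) (by omega) (by rw [hi1, hi2]; exact h); omega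
    have hmem4 : ({next^[n-1] b, b, next b, next (next b)} : Finset V) ⊆ A := by
      intro x hx
      simp only [Finset.mem_insert, Finset.mem_singleton] at hx
      rcases hx with rfl | rfl | rfl | rfl <;> assumption
    have hc4 : ({next^[n-1] b, b, next b, next (next b)} : Finset V).card = 4 := by
      rw [Finset.card_insert_of_notMem (by simp [hd1, hd2, hd3]),
        Finset.card_insert_of_notMem (by simp [hd4, hd5]),
        Finset.card_insert_of_notMem (by simp [hd6]), Finset.card_singleton]
    have := Finset.card_le_card hmem4
    rw [hc4, hAcard] at this
    omega
  -- choose the set of vertices to skip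
  have hkM : n - l ≤ M.card := by omega
  obtain ⟨S, hSM, hScard⟩ := Finset.exists_subset_card_eq hkM
  have hScons : ∀ x ∈ S, next x ∉ S := fun x hx hx' => hnoncons x (hSM hx) (hSM hx')
  have hv0 : ∃ v0 : V, v0 ∉ S := by
    have h1 : (Finset.univ \ S).Nonempty := by
      rw [← Finset.card_pos, Finset.card_sdiff_of_subset (Finset.subset_univ S), Finset.card_univ, hScard]
      omega
    obtain ⟨v0, hv0⟩ := h1
    rw [Finset.mem_sdiff] at hv0
    exact ⟨v0, hv0.2⟩
  obtain ⟨v0, hv0S⟩ := hv0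
  -- the vertex list
  set full : List V := List.iterate next v0 n with hfulldef
  have hfulllen : full.length = n := by rw [hfulldef, List.length_iterate]
  have hfullnd : full.Nodup := by
    rw [hfulldef, ← List.range_map_iterate]
    refine List.Nodup.map_on ?_ (List.nodup_range (n := n))
    intro i hi j hj hij
    rw [List.mem_range] at hi hj
    exact hiterinj v0 i j hi hj hij
  have hfulluniv : full.toFinset = Finset.univ := by
    apply Finset.eq_univ_of_card
    rw [List.toFinset_card_of_nodup hfullnd, hfulllen]
  obtain ⟨m, hm⟩ : ∃ m, n = m + 1 := ⟨n - 1, by omega⟩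
  have hfullcons : full = v0 :: List.iterate next (next v0) m := by rw [hfulldef, hm]; rfl
  set rest : List V := List.iterate next (next v0) m with hrestdef
  -- the cyclic chain
  have hchain0 : List.Chain (fun x y => y = next x) v0 (rest ++ [v0]) := by
    have h1 := chain'_iterate' next n v0
    rw [hper v0, hm] at h1
    rw [show List.iterate next v0 (m+1) = v0 :: List.iterate next (next v0) m from rfl,
      List.cons_append] at h1
    exact h1
  have hchain1 := chain_filter' next S hScons (rest ++ [v0]).length (rest ++ [v0]) le_rfl v0
    hchain0
  rw [List.filter_append, show List.filter (· ∉ S) [v0] = [v0] from by simp [hv0S]] at hchain1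
  have hchain2 : List.Chain G.Adj v0 (rest.filter (· ∉ S) ++ [v0]) := by
    refine List.Chain.imp ?_ hchain1
    rintro a b (rfl | ⟨hfs, rfl⟩)
    · exact hadj a
    · have := hchord (next a) (hSM hfs)
      rwa [hprev'] at this
  obtain ⟨hchain3, hclose⟩ := chain_split' (rest.filter (· ∉ S)) v0 v0 hchain2
  set xs : List V := v0 :: rest.filter (· ∉ S) with hxsdef
  have hxs_eq : xs = full.filter (· ∉ S) := by
    rw [hxsdef, hfullcons, List.filter_cons_of_pos (by simpa using hv0S)]
  have hxsnd : xs.Nodup := by rw [hxs_eq]; exact List.Nodup.filter _ hfullnd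
  have hxsfin : xs.toFinset = Finset.univ \ S := by
    ext x
    rw [List.mem_toFinset, hxs_eq, List.mem_filter, Finset.mem_sdiff]
    constructor
    · rintro ⟨h1, h2⟩
      refine ⟨Finset.mem_univ _, ?_⟩
      simpa using h2
    · rintro ⟨-, h2⟩
      refine ⟨?_, by simpa using h2⟩
      rw [← List.mem_toFinset, hfulluniv]
      exact Finset.mem_univ _
  have hxslen : xs.length = l := by
    have h1 : xs.toFinset.card = xs.length := List.toFinset_card_of_nodup hxsnd
    rw [hxsfin, Finset.card_sdiff_of_subset (Finset.subset_univ S), Finset.card_univ, hScard] at h1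
    omega
  have h3xs : 3 ≤ xs.length := by omega
  have hchain' : List.Chain' G.Adj xs := hchain3
  have hcl : G.Adj (xs.getLast (List.cons_ne_nil _ _)) (xs.head (List.cons_ne_nil _ _)) := hclose
  obtain ⟨w, c, hc, hclen⟩ := cycle_of_list' xs (List.cons_ne_nil _ _) hxsnd h3xs hchain' hcl
  exact ⟨w, c, hc, by rw [hclen, hxslen]⟩
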